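/- Let T > 0 and σ > 0. Define a_T(t) = (1/(2T√π))·exp(−t²/(4T²)), let c = ∫_{−σT}^{σT} a_T(t) dt, and let μ be the probability measure on ℝ given by μ = (1−c)·δ₀ + a_T(t)·1_{[−σT,σT]}(t) dt, where δ₀ is the Dirac measure at 0. Then for every x ∈ ℝ: |∫_ℝ e^{ixt} dμ(t) − exp(−x²T²)| ≤ 2(1−c) ≤ 2·exp(−σ²/4). -/

import Mathlib

open MeasureTheory

/-- the Fourier transform of the truncated Gaussian sampling distribution
`μ = (1−c)·δ₀ + a_T(t)·1_{[−σT,σT]}(t) dt` approximates the Gaussian filter `exp(−x²T²)`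
within error `2(1−c) ≤ 2·exp(−σ²/4)`. -/
theorem stmt15 (T σ : ℝ) (hT : 0 < T) (hσ : 0 < σ) (x : ℝ) :
    let aT : ℝ → ℝ := fun t => 1 / (2 * T * Real.sqrt Real.pi) * Real.exp (-t ^ 2 / (4 * T ^ 2))
    let c : ℝ := ∫ t in Set.Icc (-(σ * T)) (σ * T), aT t
    let μ : Measure ℝ :=
      ENNReal.ofReal (1 - c) • Measure.dirac 0 +
        (volume.restrict (Set.Icc (-(σ * T)) (σ * T))).withDensity fun t => ENNReal.ofReal (aT t)
    ‖(∫ t : ℝ, Complex.exp (Complex.I * x * t) ∂μ) - (Real.exp (-(x ^ 2 * T ^ 2)) : ℂ)‖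
        ≤ 2 * (1 - c) ∧
      2 * (1 - c) ≤ 2 * Real.exp (-σ ^ 2 / 4) := by
  intro aT c μ
  have hπ := Real.pi_pos
  have hsπ : 0 < Real.sqrt Real.pi := Real.sqrt_pos.mpr hπ
  set k : ℝ := 1 / (2 * T * Real.sqrt Real.pi) with hkdef
  have hk0 : 0 < k := by positivity
  set b : ℝ := 1 / (4 * T ^ 2) with hbdef
  have hb : 0 < b := by positivity
  have haTeq : aT = fun t => k * Real.exp (-b * t ^ 2) := by
    funext t
    show 1 / (2 * T * Real.sqrt Real.pi) * Real.exp (-t ^ 2 / (4 * T ^ 2))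
        = k * Real.exp (-b * t ^ 2)
    rw [hkdef, hbdef]
    ring_nf
  have haT_nonneg : ∀ t, 0 ≤ aT t := fun t => by rw [haTeq]; positivity
  have haT_cont : Continuous aT := by rw [haTeq]; continuity
  have hInt : Integrable aT := by
    rw [haTeq]; exact (integrable_exp_neg_mul_sq hb).const_mul k
  have hsqrt : Real.sqrt (Real.pi / b) = 2 * T * Real.sqrt Real.pi := by
    rw [hbdef, show Real.pi / (1 / (4 * T ^ 2)) = Real.pi * (2 * T) ^ 2 by
        rw [one_div (4*T^2), div_eq_mul_inv, inv_inv]; ring,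
      Real.sqrt_mul hπ.le, Real.sqrt_sq (by positivity)]
    ring
  have htot : (∫ t, aT t) = 1 := by
    rw [haTeq, integral_const_mul, integral_gaussian, hsqrt, hkdef]
    field_simp
  have hIccMeas : MeasurableSet (Set.Icc (-(σ * T)) (σ * T)) := measurableSet_Icc
  have hcdef : c = ∫ t in Set.Icc (-(σ * T)) (σ * T), aT t := rfl
  have hc_le : c ≤ 1 := by
    rw [hcdef, ← htot]
    exact setIntegral_le_integral hInt (Filter.Eventually.of_forall haT_nonneg)
  have hc0 : 0 ≤ c := by
    rw [hcdef]; exact setIntegral_nonneg hIccMeas fun t _ => haT_nonneg t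
  have htail : (∫ t in (Set.Icc (-(σ * T)) (σ * T))ᶜ, aT t) = 1 - c := by
    have h := integral_add_compl hIccMeas hInt
    rw [htot, ← hcdef] at h
    linarith
  set g : ℝ → ℂ := fun t => Complex.exp (Complex.I * x * t) with hgdef
  have hg_cont : Continuous g := by
    apply Complex.continuous_exp.comp
    exact (continuous_const.mul (Complex.continuous_ofReal))
  have hgnorm : ∀ t, ‖g t‖ = 1 := by
    intro t
    rw [hgdef]
    simp only [Complex.norm_exp]
    have : (Complex.I * x * t).re = 0 := by simp
    rw [this, Real.exp_zero]
  have hIntsg : Integrable (fun t => aT t • g t) := by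
    apply Integrable.mono' hInt ((haT_cont.smul hg_cont).aestronglyMeasurable)
    filter_upwards with t
    show ‖aT t • g t‖ ≤ aT t
    rw [norm_smul, hgnorm, mul_one, Real.norm_eq_abs, abs_of_nonneg (haT_nonneg t)]
  -- Fourier transform of the full Gaussian
  have hF : (∫ t : ℝ, aT t • g t) = (Real.exp (-(x ^ 2 * T ^ 2)) : ℂ) := by
    have h := fourierIntegral_gaussian (b := (b : ℂ)) (by simpa using hb) (x : ℂ)
    have e1 : (fun t : ℝ => aT t • g t)
        = fun t : ℝ => (k : ℂ) * (Complex.exp (Complex.I * x * t)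
            * Complex.exp (-(b : ℂ) * (t : ℂ) ^ 2)) := by
      funext t
      rw [haTeq, hgdef, Complex.real_smul]
      push_cast
      ring
    rw [e1, integral_const_mul, h]
    have h1 : (Real.pi : ℂ) / (b : ℂ) = ((Real.pi / b : ℝ) : ℂ) := by push_cast; ring
    have h2 : ((Real.pi / b : ℝ) : ℂ) ^ (1 / 2 : ℂ) = (Real.sqrt (Real.pi / b) : ℂ) := by
      rw [show (1 / 2 : ℂ) = ((1 / 2 : ℝ) : ℂ) by norm_num,
        ← Complex.ofReal_cpow (by positivity), Real.sqrt_eq_rpow]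
    have h3 : -(x : ℂ) ^ 2 / (4 * (b : ℂ)) = ((-(x ^ 2 * T ^ 2) : ℝ) : ℂ) := by
      rw [hbdef]
      push_cast
      have : (T : ℂ) ≠ 0 := by exact_mod_cast hT.ne'
      field_simp
    rw [h1, h2, hsqrt, h3, ← Complex.ofReal_exp, hkdef]
    norm_cast
    field_simp
  -- integral against μ
  have hmeasNN : Measurable fun t => Real.toNNReal (aT t) := haT_cont.measurable.real_toNNReal
  have hwd : (∫ t, g t ∂((volume.restrict (Set.Icc (-(σ * T)) (σ * T))).withDensity
        fun t => ENNReal.ofReal (aT t)))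
      = ∫ t in Set.Icc (-(σ * T)) (σ * T), aT t • g t := by
    rw [show (fun t => ENNReal.ofReal (aT t))
        = fun t => ((Real.toNNReal (aT t) : NNReal) : ENNReal) from rfl]
    rw [integral_withDensity_eq_integral_smul hmeasNN g]
    apply setIntegral_congr_fun hIccMeas
    intro t _
    show (aT t).toNNReal • g t = aT t • g t
    rw [NNReal.smul_def, Real.coe_toNNReal _ (haT_nonneg t)]
  have hμint : (∫ t : ℝ, g t ∂μ)
      = ((1 - c : ℝ) : ℂ) + ∫ t in Set.Icc (-(σ * T)) (σ * T), aT t • g t := by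
    show (∫ t : ℝ, g t ∂(ENNReal.ofReal (1 - c) • Measure.dirac 0 +
        (volume.restrict (Set.Icc (-(σ * T)) (σ * T))).withDensity
          fun t => ENNReal.ofReal (aT t))) = _
    rw [integral_add_measure]
    · rw [integral_smul_measure, integral_dirac, ENNReal.toReal_ofReal (by linarith), hwd]
      congr 1
      rw [hgdef]
      simp [Complex.real_smul]
    · exact Integrable.smul_measure
        ((integrable_const (g 0)).congr (ae_eq_dirac g).symm) ENNReal.ofReal_ne_top
    · rw [show (fun t => ENNReal.ofReal (aT t))
          = fun t => ((Real.toNNReal (aT t) : NNReal) : ENNReal) from rfl,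
        integrable_withDensity_iff_integrable_smul hmeasNN]
      apply Integrable.mono' hInt.integrableOn
        ((hmeasNN.aemeasurable.coe_nnreal_real.aestronglyMeasurable.smul
          hg_cont.aestronglyMeasurable.restrict))
      filter_upwards with t
      show ‖(aT t).toNNReal • g t‖ ≤ aT t
      rw [NNReal.smul_def, norm_smul, hgnorm, mul_one, Real.norm_eq_abs,
        Real.coe_toNNReal _ (haT_nonneg t), abs_of_nonneg (haT_nonneg t)]
  have hsplit : (∫ t, aT t • g t)
      = (∫ t in Set.Icc (-(σ * T)) (σ * T), aT t • g t)
        + ∫ t in (Set.Icc (-(σ * T)) (σ * T))ᶜ, aT t • g t :=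
    (integral_add_compl hIccMeas hIntsg).symm
  have hdiff : (∫ t : ℝ, g t ∂μ) - (Real.exp (-(x ^ 2 * T ^ 2)) : ℂ)
      = ((1 - c : ℝ) : ℂ) - ∫ t in (Set.Icc (-(σ * T)) (σ * T))ᶜ, aT t • g t := by
    rw [hμint, ← hF, hsplit]
    ring
  -- tail estimate
  have hσT : 0 < σ * T := mul_pos hσ hT
  have haT_even : ∀ t : ℝ, aT (-t) = aT t := by
    intro t; rw [haTeq]; simp
  have hleft : (∫ t in Set.Iio (-(σ * T)), aT t) = ∫ t in Set.Ioi (σ * T), aT t := by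
    rw [← integral_Iic_eq_integral_Iio, ← integral_comp_neg_Ioi]
    apply setIntegral_congr_fun measurableSet_Ioi
    intro t _
    exact haT_even t
  have hshift : (∫ t in Set.Ioi (σ * T), Real.exp (-b * (t - σ * T) ^ 2))
      = ∫ t in Set.Ioi (0 : ℝ), Real.exp (-b * t ^ 2) := by
    rw [← integral_indicator measurableSet_Ioi, ← integral_indicator measurableSet_Ioi,
      ← integral_sub_right_eq_self
        (fun u => (Set.Ioi (0 : ℝ)).indicator (fun v => Real.exp (-b * v ^ 2)) u) (σ * T)]
    congr 1
    funext t
    by_cases h : σ * T < t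
    · rw [Set.indicator_of_mem (Set.mem_Ioi.mpr h),
        Set.indicator_of_mem (by simp only [Set.mem_Ioi]; linarith)]
    · rw [Set.indicator_of_notMem (by simpa using h),
        Set.indicator_of_notMem (by simp only [Set.mem_Ioi]; push_neg; linarith)]
  have hIntShift : Integrable (fun t : ℝ => Real.exp (-b * (t - σ * T) ^ 2)) :=
    (integrable_exp_neg_mul_sq hb).comp_sub_right (σ * T)
  have hIoi_bound : (∫ t in Set.Ioi (σ * T), aT t) ≤ Real.exp (-σ ^ 2 / 4) / 2 := by
    have h4 : (0 : ℝ) < 4 * T ^ 2 := by positivity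
    have hpt : ∀ t ∈ Set.Ioi (σ * T),
        aT t ≤ Real.exp (-σ ^ 2 / 4) * (k * Real.exp (-b * (t - σ * T) ^ 2)) := by
      intro t ht
      rw [haTeq]
      rw [show Real.exp (-σ ^ 2 / 4) * (k * Real.exp (-b * (t - σ * T) ^ 2))
          = k * Real.exp (-σ ^ 2 / 4 + -b * (t - σ * T) ^ 2) by rw [Real.exp_add]; ring]
      apply mul_le_mul_of_nonneg_left _ hk0.le
      apply Real.exp_le_exp.mpr
      have ht' : σ * T ≤ t := le_of_lt ht
      have key : 0 ≤ 2 * (σ * T) * t - 2 * (σ * T) * (σ * T) := by nlinarith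
      have heq : -σ ^ 2 / 4 + -b * (t - σ * T) ^ 2 - (-b * t ^ 2)
          = (2 * (σ * T) * t - 2 * (σ * T) * (σ * T)) / (4 * T ^ 2) := by
        rw [hbdef]; field_simp; ring
      linarith [div_nonneg key h4.le, heq]
    calc (∫ t in Set.Ioi (σ * T), aT t)
        ≤ ∫ t in Set.Ioi (σ * T),
            Real.exp (-σ ^ 2 / 4) * (k * Real.exp (-b * (t - σ * T) ^ 2)) :=
          setIntegral_mono_on hInt.integrableOn
            (((hIntShift.const_mul k).const_mul _).integrableOn) measurableSet_Ioi hpt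
      _ = Real.exp (-σ ^ 2 / 4) * (k * ∫ t in Set.Ioi (σ * T),
            Real.exp (-b * (t - σ * T) ^ 2)) := by
          rw [integral_const_mul, integral_const_mul]
      _ = Real.exp (-σ ^ 2 / 4) * (k * (Real.sqrt (Real.pi / b) / 2)) := by
          rw [hshift, integral_gaussian_Ioi]
      _ = Real.exp (-σ ^ 2 / 4) / 2 := by
          rw [hsqrt, hkdef]; field_simp
  have hcompl_eq : (∫ t in (Set.Icc (-(σ * T)) (σ * T))ᶜ, aT t)
      = (∫ t in Set.Iio (-(σ * T)), aT t) + ∫ t in Set.Ioi (σ * T), aT t := by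
    rw [show (Set.Icc (-(σ * T)) (σ * T))ᶜ = Set.Iio (-(σ * T)) ∪ Set.Ioi (σ * T) by
      ext t
      simp only [Set.mem_compl_iff, Set.mem_Icc, Set.mem_union, Set.mem_Iio, Set.mem_Ioi,
        not_and_or, not_le]]
    apply setIntegral_union _ measurableSet_Ioi hInt.integrableOn hInt.integrableOn
    apply Set.disjoint_left.mpr
    intro a ha ha'
    simp only [Set.mem_Iio] at ha
    simp only [Set.mem_Ioi] at ha'
    linarith
  have h1c : 1 - c ≤ Real.exp (-σ ^ 2 / 4) := by
    rw [← htail, hcompl_eq, hleft]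
    linarith [hIoi_bound]
  constructor
  · rw [hdiff]
    calc ‖((1 - c : ℝ) : ℂ) - ∫ t in (Set.Icc (-(σ * T)) (σ * T))ᶜ, aT t • g t‖
        ≤ ‖((1 - c : ℝ) : ℂ)‖ + ‖∫ t in (Set.Icc (-(σ * T)) (σ * T))ᶜ, aT t • g t‖ :=
          norm_sub_le _ _
      _ ≤ (1 - c) + (1 - c) := by
          apply add_le_add
          · rw [Complex.norm_real, Real.norm_eq_abs, abs_of_nonneg (by linarith)]
          · calc ‖∫ t in (Set.Icc (-(σ * T)) (σ * T))ᶜ, aT t • g t‖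
                ≤ ∫ t in (Set.Icc (-(σ * T)) (σ * T))ᶜ, ‖aT t • g t‖ :=
                  norm_integral_le_integral_norm _
              _ = ∫ t in (Set.Icc (-(σ * T)) (σ * T))ᶜ, aT t := by
                  apply setIntegral_congr_fun hIccMeas.compl
                  intro t _
                  show ‖aT t • g t‖ = aT t
                  rw [norm_smul, hgnorm, mul_one, Real.norm_eq_abs,
                    abs_of_nonneg (haT_nonneg t)]
              _ = 1 - c := htail
      _ = 2 * (1 - c) := by ring
  · linarith
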